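/- Let (M,g) be an n-dimensional Riemannian manifold with semi-symmetric metric connection ∇̄_X Y = ∇_X Y + π(Y)X - g(X,Y)ρ, and let τ be a torse-forming vector field (∇_X τ = φX + α(X)τ). If (£̄_τ g) + [2λ - 2r̄ - (p + 2/n)] g = 0, where r̄ = r - 2(n-1)a is the scalar curvature of ∇̄, then λ = r - φ - 2(n-1)a + (1/2)(p + 2/n) - ((n-1)/n) π(τ) - α(τ)/n. -/

import Mathlib

open scoped RealInnerProductSpace

/-- Conformal Yamabe soliton w.r.t. the semi-symmetric metric connection
`∇̄_X Y = ∇_X Y + π(Y)X - g(X,Y)ρ`, `π(X)=g(X,ρ)`, with torse-forming potential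
vector field `τ` (`∇_X τ = φ X + α(X) τ`) and scalar curvature `r̄ = r - 2(n-1)a`.
If `(£̄_τ g) + [2λ - 2r̄ - (p + 2/n)] g = 0` then
`λ = r - φ - 2(n-1)a + (1/2)(p + 2/n) - ((n-1)/n)π(τ) - α(τ)/n`. -/
theorem conformal_yamabe_semi_symmetric
    {n : ℕ} (hn : 0 < n)
    {E : Type*} [NormedAddCommGroup E] [InnerProductSpace ℝ E]
    (b : OrthonormalBasis (Fin n) ℝ E)
    (τ ρ : E) (φ r a lam p : ℝ) (α : E →ₗ[ℝ] ℝ)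
    (nabla barnabla : E →ₗ[ℝ] E)
    (htf : ∀ X : E, nabla X = φ • X + α X • τ)
    (hbar : ∀ X : E, barnabla X = nabla X + ⟪τ, ρ⟫ • X - ⟪X, τ⟫ • ρ)
    (hsol : ∀ X Y : E,
      (⟪barnabla X, Y⟫ + ⟪X, barnabla Y⟫)
        + (2 * lam - 2 * (r - 2 * ((n : ℝ) - 1) * a) - (p + 2 / (n : ℝ))) * ⟪X, Y⟫ = 0) :
    lam = r - φ - 2 * ((n : ℝ) - 1) * a + (1 / 2) * (p + 2 / (n : ℝ))
        - (((n : ℝ) - 1) / (n : ℝ)) * ⟪τ, ρ⟫ - α τ / (n : ℝ) := by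
  have horth : ∀ i, ⟪b i, b i⟫ = (1:ℝ) := fun i => by
    rw [real_inner_self_eq_norm_sq, b.orthonormal.1 i]; norm_num
  set C : ℝ := 2 * lam - 2 * (r - 2 * ((n : ℝ) - 1) * a) - (p + 2 / (n : ℝ)) with hC
  have h1 : ∀ i, (2*φ + 2*(α (b i) * ⟪τ, b i⟫) + 2*⟪τ,ρ⟫ - 2*(⟪τ, b i⟫ * ⟪ρ, b i⟫)) + C = 0 := by
    intro i
    have := hsol (b i) (b i)
    rw [hbar, htf] at this
    simp only [inner_add_left, inner_add_right, inner_sub_left, inner_sub_right,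
      inner_smul_left, inner_smul_right, RCLike.inner_apply, conj_trivial, horth i] at this
    simp only [real_inner_comm τ (b i), real_inner_comm ρ (b i)] at this
    linarith [this]
  have hsum : ∑ i : Fin n, ((2*φ + 2*(α (b i) * ⟪τ, b i⟫) + 2*⟪τ,ρ⟫ - 2*(⟪τ, b i⟫ * ⟪ρ, b i⟫)) + C) = 0 := by
    simp only [h1, Finset.sum_const_zero]
  have hατ : ∑ i, α (b i) * ⟪τ, b i⟫ = α τ := by
    conv_rhs => rw [← b.sum_repr' τ]
    rw [map_sum]
    refine Finset.sum_congr rfl fun i _ => ?_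
    rw [LinearMap.map_smul, smul_eq_mul, real_inner_comm (b i) τ, mul_comm]
  have hτρ : ∑ i, ⟪τ, b i⟫ * ⟪ρ, b i⟫ = ⟪τ,ρ⟫ := by
    rw [← b.sum_inner_mul_inner τ ρ]
    refine Finset.sum_congr rfl fun i _ => ?_
    rw [real_inner_comm ρ (b i)]
  simp only [Finset.sum_add_distrib, Finset.sum_sub_distrib, Finset.sum_const,
    Finset.card_univ, Fintype.card_fin, nsmul_eq_mul, ← Finset.mul_sum, hατ, hτρ] at hsum
  have hn' : (n:ℝ) ≠ 0 := Nat.cast_ne_zero.mpr hn.ne'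
  rw [hC] at hsum
  field_simp at hsum ⊢
  linear_combination hsum
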